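/- Let V and R be finite nonempty sets and let t_1, …, t_m be pairwise distinct real numbers (timestamps, indexed by p ∈ {1,…,m}). For any subset W of V × R × V × {1,…,m}, there exist a dimension d ∈ ℕ, vectors a⃗_v, w⃗_v, b⃗_v ∈ ℝ^d and a⃖_v ∈ ℝ^d for every v ∈ V, and a vector z_r ∈ ℝ^d for every r ∈ R, such that for all v, u ∈ V, r ∈ R, and p ∈ {1,…,m}: Σ_{n=1}^{d} a⃗_v[n]·sin(w⃗_v[n]·t_p + b⃗_v[n]) · z_r[n] · a⃖_u[n] = 1 if (v,r,u,p) ∈ W, and this sum equals −1 if (v,r,u,p) ∉ W. -/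

import Mathlib

open Classical

private lemma de_simple_moment_lemma (m : ℕ) (t : Fin m → ℝ) (ht : Function.Injective t)
    (c : Fin m → ℝ)
    (H : ∀ w b : ℝ, ∑ p, c p * Real.sin (w * t p + b) = 0) :
    c = 0 := by
  have key : ∀ (j : ℕ) (w b : ℝ), ∑ p, c p * (t p)^j * Real.sin (w * t p + b) = 0 := by
    intro j
    induction j with
    | zero => simpa using H
    | succ j ih =>
      intro w b
      have hfun : (fun w => ∑ p, c p * (t p)^j *
          Real.sin (w * t p + (b - Real.pi/2))) = fun _ => 0 := by
        funext w; exact ih w (b - Real.pi/2)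
      have hderiv : ∀ w : ℝ, HasDerivAt
          (fun w => ∑ p, c p * (t p)^j * Real.sin (w * t p + (b - Real.pi/2)))
          (∑ p, c p * (t p)^j * (Real.cos (w * t p + (b - Real.pi/2)) * t p)) w := by
        intro w
        apply HasDerivAt.fun_sum
        intro p _
        have h1 : HasDerivAt (fun w : ℝ => w * t p + (b - Real.pi/2)) (t p) w := by
          simpa using ((hasDerivAt_id w).mul_const (t p)).add_const (b - Real.pi/2)
        simpa [mul_assoc] using (h1.sin.const_mul (c p * (t p)^j))
      have h0 := (hderiv w).deriv
      rw [hfun] at h0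
      simp only [deriv_const'] at h0
      rw [← h0.symm]
      apply Finset.sum_congr rfl
      intro p _
      have : Real.cos (w * t p + (b - Real.pi/2)) = Real.sin (w * t p + b) := by
        rw [← Real.sin_add_pi_div_two]; ring_nf
      rw [this]; ring
  have moments : ∀ j : ℕ, ∑ p, c p * (t p)^j = 0 := by
    intro j
    have := key j 0 (Real.pi/2)
    simpa using this
  have hv : Matrix.vecMul c (Matrix.vandermonde t) = 0 := by
    funext j
    simpa [Matrix.vecMul, dotProduct, Matrix.vandermonde] using moments j
  have hdet : (Matrix.vandermonde t).det ≠ 0 := by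
    rw [Matrix.det_vandermonde]
    apply Finset.prod_ne_zero_iff.2
    intro i _
    apply Finset.prod_ne_zero_iff.2
    intro j hj
    have : i < j := Finset.mem_Ioi.1 hj
    exact sub_ne_zero.2 (fun h => absurd (ht h) this.ne')
  have : c = Matrix.vecMul (Matrix.vecMul c (Matrix.vandermonde t)) (Matrix.vandermonde t)⁻¹ := by
    rw [Matrix.vecMul_vecMul,
      Matrix.mul_nonsing_inv _ (isUnit_iff_ne_zero.2 hdet), Matrix.vecMul_one]
  rw [hv] at this
  simpa [Matrix.zero_vecMul] using this

private lemma de_simple_interp_lemma (m : ℕ) (t : Fin m → ℝ) (ht : Function.Injective t)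
    (y : Fin m → ℝ) :
    ∃ (n : ℕ) (a w b : Fin n → ℝ), ∀ p, ∑ k, a k * Real.sin (w k * t p + b k) = y p := by
  set S : Set (Fin m → ℝ) :=
    Set.range (fun wb : ℝ × ℝ => fun p => Real.sin (wb.1 * t p + wb.2)) with hS
  have hspan : Submodule.span ℝ S = ⊤ := by
    by_contra hn
    obtain ⟨f, hf0, hker⟩ :=
      Submodule.exists_dual_map_eq_bot_of_lt_top (lt_top_iff_ne_top.2 hn) inferInstance
    have hker' : ∀ x ∈ Submodule.span ℝ S, f x = 0 := fun x hx =>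
      (Submodule.eq_bot_iff _).1 hker (f x) ⟨x, hx, rfl⟩
    set c : Fin m → ℝ := fun p => f (Pi.single p 1) with hc
    have hrep : ∀ x : Fin m → ℝ, f x = ∑ p, x p * c p := by
      intro x
      conv_lhs => rw [pi_eq_sum_univ x]
      rw [map_sum]
      apply Finset.sum_congr rfl
      intro p _
      have hfun : (fun j => if p = j then (1:ℝ) else 0) = Pi.single p 1 := by
        funext j; simp [Pi.single_apply, eq_comm]
      rw [hfun, map_smul]; simp [hc]
    have hc0 : c = 0 := by
      apply de_simple_moment_lemma m t ht
      intro w b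
      have hmem : (fun p => Real.sin (w * t p + b)) ∈ S := ⟨(w, b), rfl⟩
      have := hker' _ (Submodule.subset_span hmem)
      rw [hrep] at this
      simpa [mul_comm] using this
    exact hf0 (LinearMap.ext fun x => by rw [hrep, hc0]; simp)
  have hy : y ∈ Submodule.span ℝ S := hspan ▸ Submodule.mem_top
  rw [Submodule.mem_span_set'] at hy
  obtain ⟨n, a, g, hg⟩ := hy
  choose wb hwb using fun i => (g i).2
  refine ⟨n, a, fun i => (wb i).1, fun i => (wb i).2, ?_⟩
  intro p
  have := congrFun hg p
  rw [← this, Finset.sum_apply]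
  apply Finset.sum_congr rfl
  intro i _
  rw [← hwb i]
  simp

/-- The special case of DE-SimplE's full-expressiveness construction from the appendix:
fully temporal sinusoidal head embeddings, static tail embeddings, one static vector
per relation; the single-component score can be made exactly `1` on true tuples and
exactly `-1` on false tuples, at pairwise distinct timestamps `t 1, …, t m`. -/
theorem de_simple_special_case_expressive
    (V R : Type) [Fintype V] [Nonempty V] [Fintype R] [Nonempty R]
    (m : ℕ) (t : Fin m → ℝ) (ht : Function.Injective t)
    (W : Set (V × R × V × Fin m)) :
    ∃ (d : ℕ) (ah wh bh : V → Fin d → ℝ) (at' : V → Fin d → ℝ) (z : R → Fin d → ℝ),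
      ∀ (v u : V) (r : R) (p : Fin m),
        (∑ n, (ah v n * Real.sin (wh v n * t p + bh v n)) * z r n * at' u n) =
          if (v, r, u, p) ∈ W then 1 else -1 := by
  set y : V × R × V → Fin m → ℝ :=
    fun q p => if (q.1, q.2.1, q.2.2, p) ∈ W then 1 else -1 with hy
  have hB : ∀ q : V × R × V, ∃ (n : ℕ) (a w b : Fin n → ℝ),
      ∀ p, ∑ k, a k * Real.sin (w k * t p + b k) = y q p :=
    fun q => de_simple_interp_lemma m t ht (y q)
  choose nn a w b hab using hB
  set I := Σ q : V × R × V, Fin (nn q) with hI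
  set e : Fin (Fintype.card I) ≃ I := (Fintype.equivFin I).symm with he
  refine ⟨Fintype.card I,
    fun v i => if (e i).1.1 = v then a (e i).1 (e i).2 else 0,
    fun _ i => w (e i).1 (e i).2,
    fun _ i => b (e i).1 (e i).2,
    fun u i => if (e i).1.2.2 = u then 1 else 0,
    fun r i => if (e i).1.2.1 = r then 1 else 0,
    ?_⟩
  intro v u r p
  set F : I → ℝ := fun j =>
    ((if j.1.1 = v then a j.1 j.2 else 0) * Real.sin (w j.1 j.2 * t p + b j.1 j.2)) *
      (if j.1.2.1 = r then 1 else 0) * (if j.1.2.2 = u then 1 else 0) with hF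
  have h1 : (∑ i : Fin (Fintype.card I), F (e i)) = ∑ j : I, F j := e.sum_comp F
  have h2 : (∑ j : I, F j) = ∑ q : V × R × V, ∑ k : Fin (nn q), F ⟨q, k⟩ := by
    rw [← Finset.univ_sigma_univ, Finset.sum_sigma]
  have h3 : (∑ q : V × R × V, ∑ k : Fin (nn q), F ⟨q, k⟩)
      = ∑ k : Fin (nn (v, r, u)), F ⟨(v, r, u), k⟩ := by
    apply Finset.sum_eq_single_of_mem _ (Finset.mem_univ _)
    intro q _ hq
    apply Finset.sum_eq_zero
    intro k _
    rw [hF]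
    simp only
    rcases Prod.mk.injEq .. ▸ (fun h => hq h : ¬ q = (v, r, u)) with _
    by_cases h1 : q.1 = v
    · by_cases h2 : q.2.1 = r
      · by_cases h3 : q.2.2 = u
        · exact absurd (Prod.ext h1 (Prod.ext h2 h3)) hq
        · simp [h3]
      · simp [h2]
    · simp [h1]
  have h4 : (∑ k : Fin (nn (v, r, u)), F ⟨(v, r, u), k⟩) = y (v, r, u) p := by
    rw [← hab (v, r, u) p]
    apply Finset.sum_congr rfl
    intro k _
    rw [hF]; simp
  calc (∑ i : Fin (Fintype.card I),
        ((if (e i).1.1 = v then a (e i).1 (e i).2 else 0) *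
          Real.sin (w (e i).1 (e i).2 * t p + b (e i).1 (e i).2)) *
          (if (e i).1.2.1 = r then 1 else 0) * (if (e i).1.2.2 = u then 1 else 0))
      = ∑ i : Fin (Fintype.card I), F (e i) := rfl
    _ = if (v, r, u, p) ∈ W then 1 else -1 := by rw [h1, h2, h3, h4]
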